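/- Let r > 1, 0 ≤ η ≤ r, and let K : ℝ → ℝ≥0 satisfy K(u) ≤ C₀ ⟨u⟩^(−r) for all u ≥ 0. Then for every continuous f : ℝ → ℝ≥0, and all t ≥ 0, ∫₀ᵗ K(t−s) f(s) ds ≤ C ⟨t⟩^(−η) · sup_{0 ≤ τ ≤ t} (⟨τ⟩^η f(τ)), where C depends only on C₀, r, η. -/
import Mathlib

open MeasureTheory Real

noncomputable def jb (x : ℝ) : ℝ := Real.sqrt (1 + x ^ 2)

lemma jb_pos (x : ℝ) : 0 < jb x := Real.sqrt_pos.2 (by positivity)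

lemma jb_mono {x y : ℝ} (hx : 0 ≤ x) (hxy : x ≤ y) : jb x ≤ jb y :=
  Real.sqrt_le_sqrt (by nlinarith)

lemma jb_continuous : Continuous jb := by
  unfold jb; fun_prop

lemma jb_rpow_continuous (a : ℝ) : Continuous (fun s => jb s ^ a) :=
  jb_continuous.rpow_const (fun x => Or.inl (jb_pos x).ne')

lemma jb_half (t : ℝ) : jb t ≤ 2 * jb (t/2) := by
  have h1 : jb t ^ 2 ≤ (2 * jb (t/2))^2 := by
    rw [mul_pow, jb, jb, Real.sq_sqrt (by positivity), Real.sq_sqrt (by positivity)]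
    nlinarith [sq_nonneg t]
  nlinarith [jb_pos t, jb_pos (t/2)]

lemma one_add_le (x : ℝ) (hx : 0 ≤ x) : 1 + x ≤ Real.sqrt 2 * jb x := by
  rw [jb, ← Real.sqrt_mul (by norm_num)]
  rw [show (1+x) = Real.sqrt ((1+x)^2) from (Real.sqrt_sq (by linarith)).symm]
  exact Real.sqrt_le_sqrt (by nlinarith [sq_nonneg (1-x)])

lemma half_bound (η : ℝ) (hη : 0 ≤ η) (t u : ℝ) (h : jb t / 2 ≤ jb u) :
    jb u ^ (-η) ≤ 2^η * jb t ^ (-η) := by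
  have h1 : 0 < jb t / 2 := by linarith [jb_pos t]
  calc jb u ^ (-η) ≤ (jb t / 2) ^ (-η) :=
        Real.rpow_le_rpow_of_nonpos h1 h (neg_nonpos.mpr hη)
    _ = jb t ^ (-η) / 2 ^ (-η) := Real.div_rpow (jb_pos t).le (by norm_num) _
    _ = 2^η * jb t ^ (-η) := by
        rw [Real.rpow_neg (by norm_num : (0:ℝ) ≤ 2), div_inv_eq_mul]; ring

/-- Uniform bound on the tail integral. -/
lemma tail_bound (r : ℝ) (hr : 1 < r) (x : ℝ) (hx : 0 ≤ x) :
    ∫ s in (0:ℝ)..x, jb s ^ (-r) ≤ Real.sqrt 2 ^ r / (r - 1) := by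
  have hs2 : (0:ℝ) < Real.sqrt 2 := by positivity
  have hs2r : (0:ℝ) < Real.sqrt 2 ^ r := Real.rpow_pos_of_pos hs2 r
  have hcontOn : ContinuousOn (fun s : ℝ => Real.sqrt 2 ^ r * (1+s) ^ (-r)) (Set.uIcc 0 x) := by
    apply ContinuousOn.mul continuousOn_const
    apply ContinuousOn.rpow_const (by fun_prop)
    intro y hy
    rw [Set.uIcc_of_le hx] at hy
    exact Or.inl (by nlinarith [hy.1])
  have hint1 : IntervalIntegrable (fun s => jb s ^ (-r)) volume 0 x :=
    (jb_rpow_continuous (-r)).intervalIntegrable 0 x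
  have hint2 : IntervalIntegrable (fun s : ℝ => Real.sqrt 2 ^ r * (1+s) ^ (-r)) volume 0 x :=
    hcontOn.intervalIntegrable
  have hpt : ∀ s ∈ Set.Icc (0:ℝ) x, jb s ^ (-r) ≤ Real.sqrt 2 ^ r * (1+s) ^ (-r) := by
    intro s hs
    have h0s : 0 ≤ s := hs.1
    have h1 : (0:ℝ) < (1+s)/Real.sqrt 2 := div_pos (by linarith) hs2
    have h2 : (1+s)/Real.sqrt 2 ≤ jb s := by
      rw [div_le_iff₀ hs2]
      calc 1 + s ≤ Real.sqrt 2 * jb s := one_add_le s h0s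
        _ = jb s * Real.sqrt 2 := by ring
    calc jb s ^ (-r) ≤ ((1+s)/Real.sqrt 2) ^ (-r) :=
          Real.rpow_le_rpow_of_nonpos h1 h2 (by linarith)
      _ = (1+s) ^ (-r) / Real.sqrt 2 ^ (-r) := Real.div_rpow (by linarith) hs2.le _
      _ = Real.sqrt 2 ^ r * (1+s) ^ (-r) := by
          rw [Real.rpow_neg hs2.le, div_inv_eq_mul]; ring
  have hsub : ∫ s in (0:ℝ)..x, (1+s)^(-r) = ∫ u in (1:ℝ)..(1+x), u^(-r) := by
    have h := intervalIntegral.integral_comp_add_left (a := (0:ℝ)) (b := x)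
      (fun u : ℝ => u ^ (-r)) 1
    simpa using h
  have hval : ∫ u in (1:ℝ)..(1+x), u^(-r) = ((1+x)^(-r+1) - 1^(-r+1))/(-r+1) := by
    apply integral_rpow
    right
    refine ⟨by intro h; rw [neg_inj] at h; linarith, ?_⟩
    intro h
    rw [Set.mem_uIcc] at h
    rcases h with ⟨h1, _⟩ | ⟨_, h2⟩ <;> linarith
  have hA : 0 ≤ (1+x)^(-r+1) := Real.rpow_nonneg (by linarith) _
  have heq : ((1+x)^(-r+1) - 1)/(-r+1) = (1 - (1+x)^(-r+1))/(r-1) := by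
    rw [div_eq_div_iff (by linarith) (by linarith)]; ring
  calc ∫ s in (0:ℝ)..x, jb s ^ (-r)
      ≤ ∫ s in (0:ℝ)..x, Real.sqrt 2 ^ r * (1+s) ^ (-r) :=
        intervalIntegral.integral_mono_on hx hint1 hint2 hpt
    _ = Real.sqrt 2 ^ r * ∫ s in (0:ℝ)..x, (1+s) ^ (-r) :=
        intervalIntegral.integral_const_mul _ _
    _ = Real.sqrt 2 ^ r * ((1 - (1+x)^(-r+1))/(r-1)) := by
        rw [hsub, hval, Real.one_rpow, heq]
    _ ≤ Real.sqrt 2 ^ r * (1/(r-1)) := by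
        apply mul_le_mul_of_nonneg_left _ hs2r.le
        rw [div_le_div_iff₀ (by linarith) (by linarith)]
        nlinarith
    _ = Real.sqrt 2 ^ r / (r - 1) := by rw [mul_one_div]

/-- Pointwise Peetre-type estimate. -/
lemma key_pointwise (r η : ℝ) (hη0 : 0 ≤ η) (hηr : η ≤ r) (t : ℝ) (ht : 0 ≤ t)
    {s : ℝ} (hs : s ∈ Set.Icc (0:ℝ) t) :
    jb (t-s) ^ (-r) * jb s ^ (-η) ≤ 2^η * jb t ^ (-η) * (jb s ^ (-r) + jb (t-s) ^ (-r)) := by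
  have h2η : (0:ℝ) < 2^η := Real.rpow_pos_of_pos (by norm_num) η
  have hjt : 0 < jb t ^ (-η) := Real.rpow_pos_of_pos (jb_pos t) _
  have hnn1 : 0 ≤ jb s ^ (-r) := (Real.rpow_pos_of_pos (jb_pos s) _).le
  have hnn2 : 0 ≤ jb (t-s) ^ (-r) := (Real.rpow_pos_of_pos (jb_pos _) _).le
  have hnn3 : 0 ≤ jb s ^ (-η) := (Real.rpow_pos_of_pos (jb_pos s) _).le
  rcases le_or_gt s (t/2) with hc | hc
  · -- s ≤ t/2 : use jb (t-s) ≥ jb t / 2 and jb (t-s) ≥ jb s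
    have hts : t/2 ≤ t - s := by linarith
    have h1 : jb t / 2 ≤ jb (t-s) := by
      have := jb_half t
      have := jb_mono (by linarith : (0:ℝ) ≤ t/2) hts
      linarith
    have h2 : jb (t-s) ^ (-η) ≤ 2^η * jb t ^ (-η) := half_bound η hη0 t (t-s) h1
    have h3 : jb s ≤ jb (t-s) := jb_mono hs.1 (by linarith)
    have h4 : jb (t-s) ^ (-(r-η)) ≤ jb s ^ (-(r-η)) :=
      Real.rpow_le_rpow_of_nonpos (jb_pos s) h3 (by linarith)
    have hsplit : jb (t-s) ^ (-r) = jb (t-s) ^ (-η) * jb (t-s) ^ (-(r-η)) := by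
      rw [← Real.rpow_add (jb_pos _)]; ring_nf
    have hsplit2 : jb s ^ (-(r-η)) * jb s ^ (-η) = jb s ^ (-r) := by
      rw [← Real.rpow_add (jb_pos _)]; ring_nf
    have hnn4 : 0 ≤ jb (t-s) ^ (-η) := (Real.rpow_pos_of_pos (jb_pos _) _).le
    have hnn5 : 0 ≤ jb (t-s) ^ (-(r-η)) := (Real.rpow_pos_of_pos (jb_pos _) _).le
    calc jb (t-s) ^ (-r) * jb s ^ (-η)
        = jb (t-s) ^ (-η) * (jb (t-s) ^ (-(r-η)) * jb s ^ (-η)) := by rw [hsplit]; ring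
      _ ≤ (2^η * jb t ^ (-η)) * (jb s ^ (-(r-η)) * jb s ^ (-η)) := by
          apply mul_le_mul h2 (mul_le_mul_of_nonneg_right h4 hnn3)
            (mul_nonneg hnn5 hnn3) (by positivity)
      _ = 2^η * jb t ^ (-η) * jb s ^ (-r) := by rw [hsplit2]
      _ ≤ 2^η * jb t ^ (-η) * (jb s ^ (-r) + jb (t-s) ^ (-r)) := by nlinarith
  · -- t/2 < s : use jb s ≥ jb t / 2
    have h1 : jb t / 2 ≤ jb s := by
      have := jb_half t
      have := jb_mono (by linarith : (0:ℝ) ≤ t/2) hc.le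
      linarith
    have h2 : jb s ^ (-η) ≤ 2^η * jb t ^ (-η) := half_bound η hη0 t s h1
    calc jb (t-s) ^ (-r) * jb s ^ (-η)
        ≤ jb (t-s) ^ (-r) * (2^η * jb t ^ (-η)) := mul_le_mul_of_nonneg_left h2 hnn2
      _ = 2^η * jb t ^ (-η) * jb (t-s) ^ (-r) := by ring
      _ ≤ 2^η * jb t ^ (-η) * (jb s ^ (-r) + jb (t-s) ^ (-r)) := by nlinarith

lemma conv_bound (r η : ℝ) (hr : 1 < r) (hη0 : 0 ≤ η) (hηr : η ≤ r) (t : ℝ) (ht : 0 ≤ t) :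
    ∫ s in (0:ℝ)..t, jb (t-s) ^ (-r) * jb s ^ (-η) ≤
      2^η * (2 * (Real.sqrt 2 ^ r / (r-1))) * jb t ^ (-η) := by
  have hc1 : Continuous (fun s : ℝ => jb (t-s) ^ (-r)) :=
    (jb_rpow_continuous (-r)).comp (continuous_const.sub continuous_id)
  have hint1 : IntervalIntegrable (fun s => jb (t-s) ^ (-r) * jb s ^ (-η)) volume 0 t :=
    (hc1.mul (jb_rpow_continuous (-η))).intervalIntegrable 0 t
  have hint2 : IntervalIntegrable
      (fun s => 2^η * jb t ^ (-η) * (jb s ^ (-r) + jb (t-s) ^ (-r))) volume 0 t :=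
    (continuous_const.mul ((jb_rpow_continuous (-r)).add hc1)).intervalIntegrable 0 t
  have hia : IntervalIntegrable (fun s => jb s ^ (-r)) volume 0 t :=
    (jb_rpow_continuous (-r)).intervalIntegrable 0 t
  have hib : IntervalIntegrable (fun s => jb (t-s) ^ (-r)) volume 0 t :=
    hc1.intervalIntegrable 0 t
  have hsub : ∫ s in (0:ℝ)..t, jb (t-s) ^ (-r) = ∫ s in (0:ℝ)..t, jb s ^ (-r) := by
    have h := intervalIntegral.integral_comp_sub_left (a := (0:ℝ)) (b := t)
      (fun u : ℝ => jb u ^ (-r)) t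
    simpa using h
  have htail := tail_bound r hr t ht
  have hjt : 0 ≤ 2^η * jb t ^ (-η) :=
    mul_nonneg (Real.rpow_pos_of_pos (by norm_num) η).le
      (Real.rpow_pos_of_pos (jb_pos t) _).le
  calc ∫ s in (0:ℝ)..t, jb (t-s) ^ (-r) * jb s ^ (-η)
      ≤ ∫ s in (0:ℝ)..t, 2^η * jb t ^ (-η) * (jb s ^ (-r) + jb (t-s) ^ (-r)) :=
        intervalIntegral.integral_mono_on ht hint1 hint2
          (fun s hs => key_pointwise r η hη0 hηr t ht hs)
    _ = 2^η * jb t ^ (-η) *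
        ((∫ s in (0:ℝ)..t, jb s ^ (-r)) + ∫ s in (0:ℝ)..t, jb (t-s) ^ (-r)) := by
        rw [intervalIntegral.integral_const_mul, intervalIntegral.integral_add hia hib]
    _ ≤ 2^η * jb t ^ (-η) * (Real.sqrt 2 ^ r / (r-1) + Real.sqrt 2 ^ r / (r-1)) := by
        rw [hsub]
        exact mul_le_mul_of_nonneg_left (add_le_add htail htail) hjt
    _ = 2^η * (2 * (Real.sqrt 2 ^ r / (r-1))) * jb t ^ (-η) := by ring

theorem stmt1 (r η C₀ : ℝ) (hr : 1 < r) (hη0 : 0 ≤ η) (hηr : η ≤ r) (hC₀ : 0 < C₀)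
    (K : ℝ → ℝ) (hKnonneg : ∀ u, 0 ≤ K u)
    (hK : ∀ u : ℝ, 0 ≤ u → K u ≤ C₀ * jb u ^ (-r)) :
    ∃ C > 0, ∀ f : ℝ → ℝ, Continuous f → (∀ s, 0 ≤ f s) →
      ∀ t : ℝ, 0 ≤ t →
        ∫ s in (0:ℝ)..t, K (t - s) * f s ≤
          C * jb t ^ (-η) * sSup ((fun τ => jb τ ^ η * f τ) '' Set.Icc 0 t) := by
  set C : ℝ := C₀ * (2^η * (2 * (Real.sqrt 2 ^ r / (r-1)))) with hCdef
  have hCpos : 0 < C := by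
    apply mul_pos hC₀
    apply mul_pos (Real.rpow_pos_of_pos (by norm_num) η)
    apply mul_pos (by norm_num)
    exact div_pos (Real.rpow_pos_of_pos (by positivity) r) (by linarith)
  refine ⟨C, hCpos, ?_⟩
  intro f hf hfnn t ht
  set M : ℝ := sSup ((fun τ => jb τ ^ η * f τ) '' Set.Icc 0 t) with hMdef
  have hcont : Continuous (fun τ => jb τ ^ η * f τ) := (jb_rpow_continuous η).mul hf
  have hbdd : BddAbove ((fun τ => jb τ ^ η * f τ) '' Set.Icc 0 t) :=
    (isCompact_Icc.image hcont).bddAbove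
  have hM0 : 0 ≤ M := by
    have h0 : (0:ℝ) ≤ jb 0 ^ η * f 0 :=
      mul_nonneg (Real.rpow_pos_of_pos (jb_pos 0) η).le (hfnn 0)
    exact le_trans h0 (le_csSup hbdd ⟨0, ⟨le_refl 0, ht⟩, rfl⟩)
  have hjtnn : 0 ≤ jb t ^ (-η) := (Real.rpow_pos_of_pos (jb_pos t) _).le
  by_cases hint : IntervalIntegrable (fun s => K (t - s) * f s) volume 0 t
  · have hfle : ∀ s ∈ Set.Icc (0:ℝ) t,
        K (t-s) * f s ≤ (C₀ * M) * (jb (t-s) ^ (-r) * jb s ^ (-η)) := by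
      intro s hs
      have h1 : K (t-s) ≤ C₀ * jb (t-s) ^ (-r) := hK _ (by linarith [hs.2])
      have hpos : 0 < jb s ^ η := Real.rpow_pos_of_pos (jb_pos s) η
      have hle : jb s ^ η * f s ≤ M := le_csSup hbdd ⟨s, hs, rfl⟩
      have h2 : f s ≤ M * jb s ^ (-η) := by
        calc f s = (jb s ^ η)⁻¹ * (jb s ^ η * f s) := by field_simp
          _ ≤ (jb s ^ η)⁻¹ * M := mul_le_mul_of_nonneg_left hle (inv_nonneg.2 hpos.le)
          _ = M * jb s ^ (-η) := by rw [Real.rpow_neg (jb_pos s).le]; ring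
      have hnn : 0 ≤ C₀ * jb (t-s) ^ (-r) :=
        mul_nonneg hC₀.le (Real.rpow_pos_of_pos (jb_pos _) _).le
      calc K (t-s) * f s ≤ (C₀ * jb (t-s) ^ (-r)) * (M * jb s ^ (-η)) :=
            mul_le_mul h1 h2 (hfnn s) hnn
        _ = (C₀ * M) * (jb (t-s) ^ (-r) * jb s ^ (-η)) := by ring
    have hc1 : Continuous (fun s : ℝ => jb (t-s) ^ (-r)) :=
      (jb_rpow_continuous (-r)).comp (continuous_const.sub continuous_id)
    have hint2 : IntervalIntegrable
        (fun s => (C₀ * M) * (jb (t-s) ^ (-r) * jb s ^ (-η))) volume 0 t :=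
      (continuous_const.mul (hc1.mul (jb_rpow_continuous (-η)))).intervalIntegrable 0 t
    calc ∫ s in (0:ℝ)..t, K (t - s) * f s
        ≤ ∫ s in (0:ℝ)..t, (C₀ * M) * (jb (t-s) ^ (-r) * jb s ^ (-η)) :=
          intervalIntegral.integral_mono_on ht hint hint2 hfle
      _ = (C₀ * M) * ∫ s in (0:ℝ)..t, jb (t-s) ^ (-r) * jb s ^ (-η) :=
          intervalIntegral.integral_const_mul _ _
      _ ≤ (C₀ * M) * (2^η * (2 * (Real.sqrt 2 ^ r / (r-1))) * jb t ^ (-η)) :=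
          mul_le_mul_of_nonneg_left (conv_bound r η hr hη0 hηr t ht)
            (mul_nonneg hC₀.le hM0)
      _ = C * jb t ^ (-η) * M := by rw [hCdef]; ring
  · rw [intervalIntegral.integral_undef hint]
    exact mul_nonneg (mul_nonneg hCpos.le hjtnn) hM0
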